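/- Let TS be any test suite such that for all completely specified DFSMs S in the fault domain D, L(S) ⊆ L(M1') iff S passes TS with the reduction pass criterion. Let Π̄ = ⋃_{i=1}^k Π(q_i).{x_i}. Then any test suite TS' with pref(TS) ∩ Π̄ ⊆ TS' is complete for testing R: for all S ∈ D, S passes TS' (with the reduction pass criterion against M1') if and only if S ⊨ R. -/

import Mathlib

def dAfter {Q I : Type*} (δ : Q → I → Q) : Q → List I → Q
  | q, [] => q
  | q, x :: xs => dAfter δ (δ q x) xs

def oOut {Q I O : Type*} (δ : Q → I → Q) (ω : Q → I → O) : Q → List I → List O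
  | _, [] => []
  | q, x :: xs => ω q x :: oOut δ ω (δ q x) xs

/-- Admissible output set of M1' at (q,x): Z_i at requirement pairs, Σ_O elsewhere. -/
def reqOut {Q I O : Type*} {k : ℕ} (qr : Fin k → Q) (xr : Fin k → I)
    (Zr : Fin k → Set O) (q : Q) (x : I) : Set O :=
  {y | ∀ i, qr i = q → xr i = x → y ∈ Zr i}

/-- A completely specified DFSM implementation over input alphabet I, output alphabet O. -/
structure DFSM (S I O : Type*) where
  s0 : S
  δ : S → I → S
  ω : S → I → O

/-- The reduction pass criterion against M1' for a single input trace. -/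
def passes {Q S I O : Type*} {k : ℕ}
    (δM : Q → I → Q) (q0 : Q) (qr : Fin k → Q) (xr : Fin k → I) (Zr : Fin k → Set O)
    (M : DFSM S I O) (xs : List I) : Prop :=
  List.Forall₂ (fun (y : O) (z : Set O) => y ∈ z)
    (oOut M.δ M.ω M.s0 xs) (oOut δM (reqOut qr xr Zr) q0 xs)

lemma oOut_length {Q I O : Type*} (δ : Q → I → Q) (ω : Q → I → O) :
    ∀ (xs : List I) (q : Q), (oOut δ ω q xs).length = xs.length := by
  intro xs; induction xs with
  | nil => intro q; rfl
  | cons x xs ih => intro q; simp [oOut, ih]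

lemma dAfter_append {Q I : Type*} (δ : Q → I → Q) :
    ∀ (a b : List I) (q : Q), dAfter δ q (a ++ b) = dAfter δ (dAfter δ q a) b := by
  intro a; induction a with
  | nil => intro b q; rfl
  | cons x xs ih => intro b q; simp [dAfter, ih]

lemma oOut_append {Q I O : Type*} (δ : Q → I → Q) (ω : Q → I → O) :
    ∀ (a b : List I) (q : Q),
      oOut δ ω q (a ++ b) = oOut δ ω q a ++ oOut δ ω (dAfter δ q a) b := by
  intro a; induction a with
  | nil => intro b q; rfl
  | cons x xs ih => intro b q; simp [oOut, dAfter, ih]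

lemma forall₂_last {α β : Type*} {R : α → β → Prop} :
    ∀ (A : List α) (B : List β) (a : α) (b : β), A.length = B.length →
      List.Forall₂ R (A ++ [a]) (B ++ [b]) → R a b := by
  intro A; induction A with
  | nil =>
    intro B a b hlen h
    cases B with
    | nil => simpa using (List.forall₂_cons.mp h).1
    | cons y B => simp at hlen
  | cons x A ih =>
    intro B a b hlen h
    cases B with
    | nil => simp at hlen
    | cons y B =>
      simp only [List.cons_append] at h
      exact ih B a b (by simpa using hlen) (List.forall₂_cons.mp h).2

lemma passes_last {Q S I O : Type*} {k : ℕ}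
    (δM : Q → I → Q) (q0 : Q) (qr : Fin k → Q) (xr : Fin k → I) (Zr : Fin k → Set O)
    (M : DFSM S I O) (π : List I) (x : I)
    (h : passes δM q0 qr xr Zr M (π ++ [x])) :
    M.ω (dAfter M.δ M.s0 π) x ∈ reqOut qr xr Zr (dAfter δM q0 π) x := by
  unfold passes at h
  rw [oOut_append, oOut_append] at h
  simp only [oOut] at h
  exact forall₂_last (R := fun (y : O) (z : Set O) => y ∈ z) _ _ _ _ (by rw [oOut_length, oOut_length]) h

lemma passAll {Q S I O : Type*} {k : ℕ}
    (δM : Q → I → Q) (q0 : Q) (qr : Fin k → Q) (xr : Fin k → I) (Zr : Fin k → Set O)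
    (M : DFSM S I O)
    (h : ∀ (i : Fin k) (π : List I), dAfter δM q0 π = qr i →
        M.ω (dAfter M.δ M.s0 π) (xr i) ∈ Zr i) :
    ∀ (t π0 : List I),
      List.Forall₂ (fun (y : O) (z : Set O) => y ∈ z)
        (oOut M.δ M.ω (dAfter M.δ M.s0 π0) t)
        (oOut δM (reqOut qr xr Zr) (dAfter δM q0 π0) t) := by
  intro t; induction t with
  | nil => intro π0; exact List.Forall₂.nil
  | cons x xs ih =>
    intro π0
    refine List.Forall₂.cons ?_ ?_
    · intro i hq hx
      subst hx
      exact h i π0 hq.symm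
    · have h1 : M.δ (dAfter M.δ M.s0 π0) x = dAfter M.δ M.s0 (π0 ++ [x]) := by
        rw [dAfter_append]; rfl
      have h2 : δM (dAfter δM q0 π0) x = dAfter δM q0 (π0 ++ [x]) := by
        rw [dAfter_append]; rfl
      rw [h1, h2]; exact ih (π0 ++ [x])

lemma failPrefix {Q S I O : Type*} {k : ℕ}
    (δM : Q → I → Q) (q0 : Q) (qr : Fin k → Q) (xr : Fin k → I) (Zr : Fin k → Set O)
    (M : DFSM S I O) :
    ∀ (t π0 : List I),
      ¬ List.Forall₂ (fun (y : O) (z : Set O) => y ∈ z)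
        (oOut M.δ M.ω (dAfter M.δ M.s0 π0) t)
        (oOut δM (reqOut qr xr Zr) (dAfter δM q0 π0) t) →
      ∃ w, w ≠ [] ∧ w <+: t ∧
        (∃ (i : Fin k) (π : List I), dAfter δM q0 π = qr i ∧ π0 ++ w = π ++ [xr i]) ∧
        ¬ passes δM q0 qr xr Zr M (π0 ++ w) := by
  intro t; induction t with
  | nil => intro π0 h; exact absurd List.Forall₂.nil h
  | cons x xs ih =>
    intro π0 h
    simp only [oOut, List.forall₂_cons, not_and_or] at h
    rcases h with h | h
    · -- head fails
      have h' : ∃ i, qr i = dAfter δM q0 π0 ∧ xr i = x ∧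
          M.ω (dAfter M.δ M.s0 π0) x ∉ Zr i := by
        by_contra hc
        push_neg at hc
        exact h (fun i hq hx => hc i hq hx)
      obtain ⟨i, hq, hx, hmem⟩ := h'
      refine ⟨[x], by simp, ⟨xs, rfl⟩, ⟨i, π0, hq.symm, by rw [hx]⟩, ?_⟩
      intro hp
      have := passes_last δM q0 qr xr Zr M π0 x hp
      exact hmem (this i hq hx)
    · -- tail fails
      have h1 : M.δ (dAfter M.δ M.s0 π0) x = dAfter M.δ M.s0 (π0 ++ [x]) := by
        rw [dAfter_append]; rfl
      have h2 : δM (dAfter δM q0 π0) x = dAfter δM q0 (π0 ++ [x]) := by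
        rw [dAfter_append]; rfl
      rw [h1, h2] at h
      obtain ⟨w, hw0, hwpref, ⟨i, π, hπ, heq⟩, hwfail⟩ := ih (π0 ++ [x]) h
      refine ⟨x :: w, by simp, ?_, ⟨i, π, hπ, by simpa using heq⟩, by simpa using hwfail⟩
      obtain ⟨r, hr⟩ := hwpref
      exact ⟨r, by simp [hr]⟩

/-- if TS is a complete reduction test suite against M1' for fault domain D,
then any suite TS' containing pref(TS) ∩ Π̄ is complete for testing the composite
requirement R: for all S ∈ D, S passes TS' iff S ⊨ R. -/
theorem stmt_15 {Q S I O : Type*}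
    (δM : Q → I → Q) (ωM : Q → I → O) (q0 : Q)
    -- M prime: all states reachable, distinct states distinguishable
    (hMreach : ∀ q : Q, ∃ π : List I, dAfter δM q0 π = q)
    (hMdist : ∀ q q' : Q, (∀ xs : List I, oOut δM ωM q xs = oOut δM ωM q' xs) → q = q')
    (k : ℕ) (qr : Fin k → Q) (xr : Fin k → I) (Zr : Fin k → Set O)
    (hZ : ∀ i, ωM (qr i) (xr i) ∈ Zr i)
    (D : Set (DFSM S I O)) (TS TS' : Set (List I))
    -- TS is complete for reduction testing against M1' on the fault domain D
    (hTS : ∀ M ∈ D, (∀ xs ∈ TS, passes δM q0 qr xr Zr M xs) ↔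
      ∀ xs : List I, passes δM q0 qr xr Zr M xs)
    -- pref(TS) ∩ Π̄ ⊆ TS'
    (hTS' : ∀ w : List I, w ≠ [] → (∃ t ∈ TS, w <+: t) →
      (∃ (i : Fin k) (π : List I), dAfter δM q0 π = qr i ∧ w = π ++ [xr i]) →
      w ∈ TS') :
    ∀ M ∈ D, (∀ xs ∈ TS', passes δM q0 qr xr Zr M xs) ↔
      (∀ (i : Fin k) (π : List I), dAfter δM q0 π = qr i →
        M.ω (dAfter M.δ M.s0 π) (xr i) ∈ Zr i) := by
  intro M hM
  constructor
  · intro hpass i π hπ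
    by_contra hout
    have hnotall : ¬ ∀ xs : List I, passes δM q0 qr xr Zr M xs := by
      intro hall
      have := passes_last δM q0 qr xr Zr M π (xr i) (hall (π ++ [xr i]))
      rw [hπ] at this
      exact hout (this i rfl rfl)
    have hTSfail : ∃ t ∈ TS, ¬ passes δM q0 qr xr Zr M t := by
      by_contra hc
      push_neg at hc
      exact hnotall ((hTS M hM).mp hc)
    obtain ⟨t, htTS, htfail⟩ := hTSfail
    obtain ⟨w, hw0, hwpref, ⟨i', π', hπ', heq⟩, hwfail⟩ :=
      failPrefix δM q0 qr xr Zr M t [] (by simpa [passes, dAfter] using htfail)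
    simp only [List.nil_append] at heq hwfail
    have hwTS' := hTS' w hw0 ⟨t, htTS, hwpref⟩ ⟨i', π', hπ', heq⟩
    exact hwfail (hpass w hwTS')
  · intro hR xs _
    have := passAll δM q0 qr xr Zr M hR xs []
    simpa [passes, dAfter] using this
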